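/- The function Q is strictly concave on its domain D (which is an interval): for all x₁, x₂ ∈ D with x₁ ≠ x₂ and all t ∈ (0,1), Q(t·x₁ + (1−t)·x₂) > t·Q(x₁) + (1−t)·Q(x₂). -/

import Mathlib

noncomputable def gpdf (t : ℝ) : ℝ := Real.exp (-t ^ 2 / 2) / Real.sqrt (2 * Real.pi)

noncomputable def gcdf (x : ℝ) : ℝ := ∫ t in Set.Iic x, gpdf t

noncomputable def gquant : ℝ → ℝ := Function.invFun gcdf

noncomputable def sHat (η σ : ℝ) : ℝ := Real.sqrt (η ^ 2 + σ ^ 2)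

noncomputable def sTil (η σ : ℝ) : ℝ := η ^ 2 / sHat η σ

def Dset (pA α : ℝ) : Set ℝ :=
  {x | x ∈ Set.Ioo (0:ℝ) 1 ∧ (α - pA * x) / (1 - pA) ∈ Set.Ioo (0:ℝ) 1}

noncomputable def Qfun (pA α μA μB sA sB x : ℝ) : ℝ :=
  (1 / α) * (pA * (μA * x + sA * gpdf (gquant (1 - x)))
    + (1 - pA) * (μB * ((α - pA * x) / (1 - pA))
      + sB * gpdf (gquant (1 - (α - pA * x) / (1 - pA)))))

noncomputable def clampTo (lo hi x : ℝ) : ℝ := min hi (max lo x)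



open MeasureTheory Real Set Filter Topology

lemma gpdf_pos (t : ℝ) : 0 < gpdf t := by
  unfold gpdf
  positivity

lemma gpdf_eq (t : ℝ) : gpdf t = (Real.sqrt (2 * Real.pi))⁻¹ * Real.exp (-(1/2) * t ^ 2) := by
  unfold gpdf; rw [div_eq_inv_mul]; ring_nf

lemma integrable_gpdf : Integrable gpdf := by
  have : Integrable (fun t : ℝ => Real.exp (-(1/2) * t ^ 2)) := integrable_exp_neg_mul_sq (by norm_num)
  simpa only [← gpdf_eq] using this.const_mul (Real.sqrt (2 * Real.pi))⁻¹

lemma continuous_gpdf : Continuous gpdf := by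
  unfold gpdf; fun_prop

lemma integral_gpdf : ∫ t, gpdf t = 1 := by
  have h := integral_gaussian (1/2 : ℝ)
  have h2 : ∫ t : ℝ, Real.exp (-(1/2) * t ^ 2) = Real.sqrt (2 * Real.pi) := by
    rw [h, show Real.pi / (1/2) = 2 * Real.pi by ring]
  calc ∫ t, gpdf t = (Real.sqrt (2 * Real.pi))⁻¹ * ∫ t : ℝ, Real.exp (-(1/2) * t ^ 2) := by
        simp_rw [gpdf_eq]; rw [integral_const_mul]
    _ = 1 := by rw [h2]; rw [inv_mul_cancel₀]; positivity

lemma gcdf_eq (x : ℝ) : gcdf x = gcdf 0 + ∫ t in (0:ℝ)..x, gpdf t := by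
  have h := intervalIntegral.integral_Iic_sub_Iic (μ := volume) (f := gpdf) (a := 0) (b := x)
    integrable_gpdf.integrableOn integrable_gpdf.integrableOn
  unfold gcdf
  rw [← h]; ring

lemma hasDerivAt_gcdf (x : ℝ) : HasDerivAt gcdf (gpdf x) x := by
  have h : HasDerivAt (fun u => ∫ t in (0:ℝ)..u, gpdf t) (gpdf x) x :=
    intervalIntegral.integral_hasDerivAt_right integrable_gpdf.intervalIntegrable
      (continuous_gpdf.stronglyMeasurableAtFilter _ _) continuous_gpdf.continuousAt
  have := h.const_add (gcdf 0)
  simpa [← gcdf_eq] using this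

lemma gcdf_strictMono : StrictMono gcdf := by
  apply strictMono_of_deriv_pos
  intro x
  rw [(hasDerivAt_gcdf x).deriv]
  exact gpdf_pos x

lemma gcdf_tendsto_atTop : Tendsto gcdf atTop (𝓝 1) := by
  have h := (MeasureTheory.aecover_Iic (μ := (volume : Measure ℝ)) (l := atTop)
    tendsto_id).integral_tendsto_of_countably_generated integrable_gpdf
  rwa [integral_gpdf] at h

lemma gcdf_tendsto_atBot : Tendsto gcdf atBot (𝓝 0) := by
  have h := MeasureTheory.intervalIntegral_tendsto_integral_Iic (μ := volume) (f := gpdf)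
    (a := fun x : ℝ => x) 0 integrable_gpdf.integrableOn tendsto_id
  have h2 : Tendsto (fun x : ℝ => gcdf 0 - ∫ t in x..(0:ℝ), gpdf t) atBot (𝓝 (gcdf 0 - gcdf 0)) :=
    tendsto_const_nhds.sub h
  rw [sub_self] at h2
  refine h2.congr fun x => ?_
  rw [intervalIntegral.integral_symm]
  have := gcdf_eq x
  linarith

lemma gcdf_surjOn : ∀ p ∈ Ioo (0:ℝ) 1, ∃ x, gcdf x = p := by
  intro p hp
  obtain ⟨a, ha⟩ := (gcdf_tendsto_atBot.eventually (eventually_lt_nhds hp.1)).exists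
  obtain ⟨b, hb⟩ := (gcdf_tendsto_atTop.eventually (eventually_gt_nhds hp.2)).exists
  have hab : a ≤ b := by
    by_contra h
    exact absurd (gcdf_strictMono (lt_of_not_ge h)) (by linarith)
  have hcont : ContinuousOn gcdf (Icc a b) :=
    (continuous_iff_continuousAt.2 fun x => (hasDerivAt_gcdf x).continuousAt).continuousOn
  obtain ⟨x, _, hx⟩ := intermediate_value_Icc hab hcont ⟨ha.le, hb.le⟩
  exact ⟨x, hx⟩

lemma gcdf_gquant {p : ℝ} (hp : p ∈ Ioo (0:ℝ) 1) : gcdf (gquant p) = p :=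
  Function.invFun_eq (gcdf_surjOn p hp)

lemma gquant_gcdf (x : ℝ) : gquant (gcdf x) = x :=
  Function.leftInverse_invFun gcdf_strictMono.injective x

lemma gquant_mem_of (p : ℝ) (hp : p ∈ Ioo (0:ℝ) 1) : True := trivial

lemma continuousAt_gquant {p : ℝ} (hp : p ∈ Ioo (0:ℝ) 1) : ContinuousAt gquant p := by
  rw [Metric.continuousAt_iff]
  intro ε hε
  set a := gquant p with ha
  have hga : gcdf a = p := gcdf_gquant hp
  refine ⟨min (p - gcdf (a - ε/2)) (gcdf (a + ε/2) - p), ?_, ?_⟩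
  · have h1 : gcdf (a - ε/2) < p := by rw [← hga]; exact gcdf_strictMono (by linarith)
    have h2 : p < gcdf (a + ε/2) := by rw [← hga]; exact gcdf_strictMono (by linarith)
    exact lt_min (by linarith) (by linarith)
  · intro q hq
    rw [Real.dist_eq] at hq ⊢
    have hq1 : gcdf (a - ε/2) < q := by
      have := abs_lt.1 hq
      have := min_le_left (p - gcdf (a - ε/2)) (gcdf (a + ε/2) - p)
      linarith
    have hq2 : q < gcdf (a + ε/2) := by
      have := abs_lt.1 hq
      have := min_le_right (p - gcdf (a - ε/2)) (gcdf (a + ε/2) - p)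
      linarith
    have hcont : ContinuousOn gcdf (Icc (a - ε/2) (a + ε/2)) :=
      (continuous_iff_continuousAt.2 fun x => (hasDerivAt_gcdf x).continuousAt).continuousOn
    obtain ⟨x, hxm, hx⟩ := intermediate_value_Icc (by linarith : a - ε/2 ≤ a + ε/2) hcont
      ⟨hq1.le, hq2.le⟩
    have : gquant q = x := by rw [← hx, gquant_gcdf]
    rw [this]
    rw [abs_lt]
    constructor <;> [skip; skip] <;> · have := hxm.1; have := hxm.2; linarith

lemma hasDerivAt_gquant {p : ℝ} (hp : p ∈ Ioo (0:ℝ) 1) :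
    HasDerivAt gquant (gpdf (gquant p))⁻¹ p := by
  apply HasDerivAt.of_local_left_inverse (continuousAt_gquant hp) (hasDerivAt_gcdf (gquant p))
    (ne_of_gt (gpdf_pos _))
  have : Ioo (0:ℝ) 1 ∈ 𝓝 p := isOpen_Ioo.mem_nhds hp
  filter_upwards [this] with q hq
  exact gcdf_gquant hq

lemma hasDerivAt_gpdf (t : ℝ) : HasDerivAt gpdf (-t * gpdf t) t := by
  have h : HasDerivAt (fun t : ℝ => -t ^ 2 / 2) (-t) t := by
    have := ((hasDerivAt_pow 2 t).neg).div_const 2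
    simpa using this.congr_deriv (by ring)
  have h2 := (h.exp).div_const (Real.sqrt (2 * Real.pi))
  unfold gpdf
  refine h2.congr_deriv ?_
  ring

lemma hasDerivAt_f {p : ℝ} (hp : p ∈ Ioo (0:ℝ) 1) :
    HasDerivAt (fun q => gpdf (gquant q)) (-(gquant p)) p := by
  have h := (hasDerivAt_gpdf (gquant p)).comp p (hasDerivAt_gquant hp)
  refine h.congr_deriv ?_
  field_simp [(gpdf_pos (gquant p)).ne']

lemma strictConcaveOn_f : StrictConcaveOn ℝ (Ioo (0:ℝ) 1) (fun q => gpdf (gquant q)) := by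
  apply strictConcaveOn_of_deriv2_neg (convex_Ioo 0 1)
  · intro x hx
    exact ((hasDerivAt_f hx).continuousAt).continuousWithinAt
  · intro x hx
    rw [interior_Ioo] at hx
    have hev : (deriv fun q => gpdf (gquant q)) =ᶠ[𝓝 x] fun q => -(gquant q) := by
      filter_upwards [isOpen_Ioo.mem_nhds hx] with q hq
      exact (hasDerivAt_f hq).deriv
    show deriv (deriv fun q => gpdf (gquant q)) x < 0
    rw [hev.deriv_eq]
    have : HasDerivAt (fun q => -(gquant q)) (-(gpdf (gquant x))⁻¹) x :=
      (hasDerivAt_gquant hx).neg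
    rw [this.deriv]
    simp [gpdf_pos, inv_pos.2 (gpdf_pos (gquant x))]


lemma sTil_pos {η σ : ℝ} (hη : 0 < η) (hσ : 0 < σ) : 0 < sTil η σ := by
  unfold sTil sHat
  positivity

lemma f_strict {u v t : ℝ} (hu : u ∈ Ioo (0:ℝ) 1) (hv : v ∈ Ioo (0:ℝ) 1) (huv : u ≠ v)
    (ht : t ∈ Ioo (0:ℝ) 1) :
    t * gpdf (gquant u) + (1 - t) * gpdf (gquant v) < gpdf (gquant (t * u + (1 - t) * v)) := by
  have := strictConcaveOn_f.2 hu hv huv (show (0:ℝ) < t from ht.1)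
    (show (0:ℝ) < 1 - t by linarith [ht.2]) (show t + (1 - t) = 1 by ring)
  simpa [smul_eq_mul] using this


/-- the utility `Q` is strictly concave on its (convex) domain `D`. -/
theorem stmt4 (pA α μA μB ηA ηB σA σB : ℝ)
    (hpA : pA ∈ Set.Ioo (0:ℝ) 1) (hα : α ∈ Set.Ioo (0:ℝ) 1)
    (hηA : 0 < ηA) (hηB : 0 < ηB) (hσA : 0 < σA) (hσB : 0 < σB) :
    Convex ℝ (Dset pA α)
    ∧ ∀ x₁ ∈ Dset pA α, ∀ x₂ ∈ Dset pA α, x₁ ≠ x₂ → ∀ t ∈ Set.Ioo (0:ℝ) 1,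
        t * Qfun pA α μA μB (sTil ηA σA) (sTil ηB σB) x₁
          + (1 - t) * Qfun pA α μA μB (sTil ηA σA) (sTil ηB σB) x₂
        < Qfun pA α μA μB (sTil ηA σA) (sTil ηB σB) (t * x₁ + (1 - t) * x₂) := by
  have hpA0 : 0 < pA := hpA.1
  have hpA1 : (0:ℝ) < 1 - pA := by linarith [hpA.2]
  have hcomb : ∀ a b x y : ℝ, a + b = 1 →
      (α - pA * (a * x + b * y)) / (1 - pA)
        = a * ((α - pA * x) / (1 - pA)) + b * ((α - pA * y) / (1 - pA)) := by
    intro a b x y hab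
    field_simp
    linear_combination (-α) * hab
  constructor
  · intro x hx y hy a b ha hb hab
    have hx' : x ∈ Ioo (0:ℝ) 1 := hx.1
    have hy' : y ∈ Ioo (0:ℝ) 1 := hy.1
    constructor
    · exact convex_Ioo (0:ℝ) 1 hx' hy' ha hb hab
    · have := convex_Ioo (0:ℝ) 1 hx.2 hy.2 ha hb hab
      simp only [smul_eq_mul] at this ⊢
      rw [hcomb a b x y hab]
      exact this
  · intro x₁ hx₁ x₂ hx₂ hne t ht
    set sA := sTil ηA σA with hsA
    set sB := sTil ηB σB with hsB
    have hsApos : 0 < sA := sTil_pos hηA hσA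
    have hsBpos : 0 < sB := sTil_pos hηB hσB
    have hαpos : 0 < α := hα.1
    set y₁ := (α - pA * x₁) / (1 - pA) with hy₁
    set y₂ := (α - pA * x₂) / (1 - pA) with hy₂
    have h1mem : (1 - x₁) ∈ Ioo (0:ℝ) 1 := ⟨by linarith [hx₁.1.2], by linarith [hx₁.1.1]⟩
    have h2mem : (1 - x₂) ∈ Ioo (0:ℝ) 1 := ⟨by linarith [hx₂.1.2], by linarith [hx₂.1.1]⟩
    have hy1mem : (1 - y₁) ∈ Ioo (0:ℝ) 1 := ⟨by linarith [hx₁.2.2], by linarith [hx₁.2.1]⟩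
    have hy2mem : (1 - y₂) ∈ Ioo (0:ℝ) 1 := ⟨by linarith [hx₂.2.2], by linarith [hx₂.2.1]⟩
    have hyne : (1 - y₁) ≠ (1 - y₂) := by
      intro h
      apply hne
      have : y₁ = y₂ := by linarith
      rw [hy₁, hy₂, div_eq_div_iff (ne_of_gt hpA1) (ne_of_gt hpA1)] at this
      have h3 : pA * x₁ = pA * x₂ := by nlinarith [this]
      exact mul_left_cancel₀ (ne_of_gt hpA0) h3
    have hxne : (1 - x₁) ≠ (1 - x₂) := fun h => hne (by linarith)
    have hF := f_strict h1mem h2mem hxne ht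
    have hG := f_strict hy1mem hy2mem hyne ht
    have harg1 : t * (1 - x₁) + (1 - t) * (1 - x₂) = 1 - (t * x₁ + (1 - t) * x₂) := by ring
    have harg2 : t * (1 - y₁) + (1 - t) * (1 - y₂)
        = 1 - (α - pA * (t * x₁ + (1 - t) * x₂)) / (1 - pA) := by
      rw [hcomb t (1 - t) x₁ x₂ (by ring)]; ring
    rw [harg1] at hF
    rw [harg2] at hG
    unfold Qfun
    rw [hy₁] at hG
    rw [hy₂] at hG
    set F₁ := gpdf (gquant (1 - x₁))
    set F₂ := gpdf (gquant (1 - x₂))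
    set Fz := gpdf (gquant (1 - (t * x₁ + (1 - t) * x₂)))
    set G₁ := gpdf (gquant (1 - (α - pA * x₁) / (1 - pA)))
    set G₂ := gpdf (gquant (1 - (α - pA * x₂) / (1 - pA)))
    set Gz := gpdf (gquant (1 - (α - pA * (t * x₁ + (1 - t) * x₂)) / (1 - pA)))
    have key : (1 / α) * (pA * (μA * (t * x₁ + (1 - t) * x₂) + sA * Fz)
          + (1 - pA) * (μB * ((α - pA * (t * x₁ + (1 - t) * x₂)) / (1 - pA)) + sB * Gz))
        - (t * ((1 / α) * (pA * (μA * x₁ + sA * F₁)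
            + (1 - pA) * (μB * ((α - pA * x₁) / (1 - pA)) + sB * G₁)))
          + (1 - t) * ((1 / α) * (pA * (μA * x₂ + sA * F₂)
            + (1 - pA) * (μB * ((α - pA * x₂) / (1 - pA)) + sB * G₂))))
        = (pA * sA / α) * (Fz - (t * F₁ + (1 - t) * F₂))
          + ((1 - pA) * sB / α) * (Gz - (t * G₁ + (1 - t) * G₂)) := by
      field_simp
      ring
    have hc1 : 0 < pA * sA / α := by positivity
    have hc2 : 0 < (1 - pA) * sB / α := by positivity
    nlinarith [mul_pos hc1 (sub_pos.2 hF), mul_pos hc2 (sub_pos.2 hG), key]
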